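/- Let D and E be the ℕ×ℕ matrices with D(i,i) = y+i, D(i,i+1) = i+1, E(i,i) = x̄+i, E(i+1,i) = y+x̄+i (other entries zero), and let M = ED + (z̄+x−x̄)·D + (z+ȳ−y)·E + (ȳ−y)(x−x̄)·I. Then M is tridiagonal, and for all i ≥ 0: M(i,i) = (x+i)(ȳ+i) + (y+i)(z̄+i) + (z+i)(x̄+i) − i(i+1), M(i,i+1) = (x+z̄+i)(i+1), and M(i+1,i) = (x̄+y+i)(z+ȳ+i). -/

import Mathlib

/-- Entrywise product of ℕ×ℕ matrices; the (finite, for banded matrices) sums are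
expressed with `finsum`. -/
noncomputable def matMul {R : Type*} [CommRing R] (M N : ℕ → ℕ → R) : ℕ → ℕ → R :=
  fun i j => ∑ᶠ k, M i k * N k j

/-- Powers of a ℕ×ℕ matrix, with `matPow M 0` the identity matrix. -/
noncomputable def matPow {R : Type*} [CommRing R] (M : ℕ → ℕ → R) : ℕ → ℕ → ℕ → R
  | 0 => fun i j => if i = j then 1 else 0
  | n + 1 => matMul M (matPow M n)

/-- The matrix `D`: `D i i = y + i`, `D i (i+1) = i + 1`, other entries zero. -/
def matD {R : Type*} [CommRing R] (y : R) : ℕ → ℕ → R := fun i j =>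
  if j = i then y + (i : R) else if j = i + 1 then (i : R) + 1 else 0

/-- The matrix `E`: `E i i = x̄ + i`, `E (i+1) i = y + x̄ + i`, other entries zero. -/
def matE {R : Type*} [CommRing R] (y xb : R) : ℕ → ℕ → R := fun i j =>
  if j = i then xb + (i : R) else if i = j + 1 then y + xb + (j : R) else 0

/-- The matrix `M = ED + (z̄+x−x̄)D + (z+ȳ−y)E + (ȳ−y)(x−x̄)I`. -/
noncomputable def matM {R : Type*} [CommRing R] (x y z xb yb zb : R) : ℕ → ℕ → R :=
  fun i j =>
    matMul (matE y xb) (matD y) i j + (zb + x - xb) * matD y i j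
      + (z + yb - y) * matE y xb i j
      + (yb - y) * (x - xb) * (if i = j then 1 else 0)


lemma ED {R : Type*} [CommRing R] (y xb : R) (i j : ℕ) :
    matMul (matE y xb) (matD y) i j =
      matE y xb i i * matD y i j +
        (match i with | 0 => 0 | k + 1 => matE y xb (k+1) k * matD y k j) := by
  have hsub : Function.support (fun k => matE y xb i k * matD y k j) ⊆ ({i - 1, i} : Finset ℕ) := by
    intro k hk
    simp only [Function.mem_support] at hk
    simp only [Finset.coe_insert, Finset.coe_singleton, Set.mem_insert_iff, Set.mem_singleton_iff]
    by_contra h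
    push_neg at h
    apply hk
    have h1 : k ≠ i := h.2
    have h2 : i ≠ k + 1 := by omega
    simp [matE, h1, h2]
  rw [matMul, finsum_eq_sum_of_support_subset _ hsub]
  cases i with
  | zero => simp
  | succ k =>
    rw [show ((k+1) - 1 : ℕ) = k from rfl, Finset.sum_insert (by simp), Finset.sum_singleton]
    ring

theorem matM_entries {R : Type*} [CommRing R] (x y z xb yb zb : R) :
    (∀ i j : ℕ, (i + 1 < j ∨ j + 1 < i) → matM x y z xb yb zb i j = 0) ∧
    (∀ i : ℕ, matM x y z xb yb zb i i =
      (x + (i : R)) * (yb + i) + (y + i) * (zb + i) + (z + i) * (xb + i)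
        - i * (i + 1)) ∧
    (∀ i : ℕ, matM x y z xb yb zb i (i + 1) = (x + zb + (i : R)) * ((i : R) + 1)) ∧
    (∀ i : ℕ, matM x y z xb yb zb (i + 1) i = (xb + y + (i : R)) * (z + yb + (i : R))) := by
  refine ⟨?_, ?_, ?_, ?_⟩
  · intro i j h
    have h1 : j ≠ i := by omega
    have h2 : j ≠ i + 1 := by omega
    have h3 : i ≠ j := by omega
    have h4 : i ≠ j + 1 := by omega
    cases i with
    | zero => simp [matM, ED, matE, matD, h1, h2, h3, h4]
    | succ k =>
      have h5 : j ≠ k := by omega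
      have h6 : j ≠ k + 1 := by omega
      simp [matM, ED, matE, matD, h1, h2, h3, h4, h5, h6, h5.symm]
  · intro i
    cases i with
    | zero => simp [matM, ED, matE, matD]; ring
    | succ k =>
      have h1 : k + 1 ≠ k := by omega
      simp [matM, ED, matE, matD, h1]
      ring
  · intro i
    have h1 : i + 1 ≠ i := by omega
    cases i with
    | zero => simp [matM, ED, matE, matD]; ring
    | succ k =>
      have h2 : k + 1 + 1 ≠ k := by omega
      have h3 : k + 1 + 1 ≠ k + 1 := by omega
      simp [matM, ED, matE, matD, h1, h2, h3]
      ring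
  · intro i
    have h1 : i ≠ i + 1 := by omega
    have h2 : i + 1 ≠ i := by omega
    have h3 : i ≠ i + 1 + 1 := by omega
    simp [matM, ED, matE, matD, h1, h2, h3]
    ring
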